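/- Let H be a torsion-free group that is δ-hyperbolic with respect to a finite generating set S, and let g, h ∈ H satisfy ‖g‖ > 15δ, ‖h‖ > 15δ and ‖gh‖ > 5δ. Then the distance between the axes 𝒜_g and 𝒜_h is at most max{15δ, (‖gh‖ − ‖g‖ − ‖h‖)/2 + 18δ}. -/

import Mathlib

variable {G : Type*} [Group G]

/-- Word length of `g` with respect to a generating set `S`: the least number of
letters from `S ∪ S⁻¹` whose product is `g`. -/
noncomputable def wlen (S : Set G) (g : G) : ℕ :=
  sInf {n : ℕ | ∃ L : List G, (∀ x ∈ L, x ∈ S ∨ x⁻¹ ∈ S) ∧ L.length = n ∧ L.prod = g}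

/-- `f` parametrizes a geodesic segment from `a` to `b` (by arc length on
`[0, dist a b]`). -/
def IsGeodSeg {X : Type*} [MetricSpace X] (f : ℝ → X) (a b : X) : Prop :=
  f 0 = a ∧ f (dist a b) = b ∧
    ∀ s ∈ Set.Icc (0 : ℝ) (dist a b), ∀ t ∈ Set.Icc (0 : ℝ) (dist a b),
      dist (f s) (f t) = |s - t|

/-- A geodesic metric space: any two points are joined by a geodesic. -/
def GeodesicSpace (X : Type*) [MetricSpace X] : Prop :=
  ∀ a b : X, ∃ f : ℝ → X, IsGeodSeg f a b

/-- All geodesic triangles of `X` are `δ`-thin: for any two geodesic sides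
issuing from a common vertex `a`, the points at equal parameter
`t ≤ (d(a,b) + d(a,c) - d(b,c))/2` on the two sides are at distance `≤ δ`. -/
def SlimTriangles (X : Type*) [MetricSpace X] (δ : ℝ) : Prop :=
  ∀ (a b c : X) (f g : ℝ → X), IsGeodSeg f a b → IsGeodSeg g a c →
    ∀ t : ℝ, 0 ≤ t → t ≤ (dist a b + dist a c - dist b c) / 2 →
      dist (f t) (g t) ≤ δ

/-- The Cayley graph `Γ(G,S)`, axiomatized: a metric space `X` with an isometric
`G`-action, together with an equivariant embedding `ι : G → X` of the vertex set
realizing the word metric, whose image is `1`-dense (each point of `Γ(G,S)` lies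
on an edge, within distance `1` of a vertex). -/
structure CayleyModel (S : Set G) (X : Type*) [MetricSpace X] [MulAction G X]
    (ι : G → X) : Prop where
  isom : ∀ (h : G) (p q : X), dist (h • p) (h • q) = dist p q
  vertex_dist : ∀ a b : G, dist (ι a) (ι b) = (wlen S (a⁻¹ * b) : ℝ)
  equivariant : ∀ a b : G, ι (a * b) = a • ι b
  dense : ∀ p : X, ∃ a : G, dist p (ι a) ≤ 1

/-- The norm of `g`: `‖g‖ = inf { d(p, g • p) : p ∈ Γ(G,S) }`. -/
noncomputable def xnorm (X : Type*) [MetricSpace X] [MulAction G X] (g : G) : ℝ :=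
  sInf (Set.range fun p : X => dist p (g • p))

/-- The axis of `g`: the set of points of `Γ(G,S)` where `d(p, g • p)` attains
the norm `‖g‖`. -/
def axisOf (X : Type*) [MetricSpace X] [MulAction G X] (g : G) : Set X :=
  {p : X | dist p (g • p) = xnorm X g}

namespace Stmt19Aux

/-- Gromov product of `x, y` at `w`. -/
noncomputable def gpr {X : Type*} [MetricSpace X] (w x y : X) : ℝ :=
  (dist w x + dist w y - dist x y) / 2

lemma gpr_nonneg {X : Type*} [MetricSpace X] (w x y : X) : 0 ≤ gpr w x y := by
  have h := dist_triangle x w y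
  rw [dist_comm x w] at h
  unfold gpr; linarith

lemma gpr_le_left {X : Type*} [MetricSpace X] (w x y : X) : gpr w x y ≤ dist w x := by
  have h := dist_triangle w x y
  unfold gpr; linarith

lemma gpr_comm23 {X : Type*} [MetricSpace X] (w x y : X) : gpr w x y = gpr w y x := by
  unfold gpr; rw [dist_comm x y]; ring

lemma gpr_add {X : Type*} [MetricSpace X] (a b c : X) :
    gpr a b c + gpr b a c = dist a b := by
  unfold gpr; rw [dist_comm b a]; ring

lemma dist_eq_gpr {X : Type*} [MetricSpace X] (w x y : X) :
    dist x y = dist w x + dist w y - 2 * gpr w x y := by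
  unfold gpr; ring

lemma geod_dist_from_start {X : Type*} [MetricSpace X] {f : ℝ → X} {a b : X}
    (hf : IsGeodSeg f a b) {t : ℝ} (h0 : 0 ≤ t) (h1 : t ≤ dist a b) :
    dist a (f t) = t := by
  have h := hf.2.2 0 ⟨le_refl 0, dist_nonneg⟩ t ⟨h0, h1⟩
  rw [hf.1] at h
  rw [h, abs_of_nonpos (by linarith)]; ring

lemma geod_dist_to_end {X : Type*} [MetricSpace X] {f : ℝ → X} {a b : X}
    (hf : IsGeodSeg f a b) {t : ℝ} (h0 : 0 ≤ t) (h1 : t ≤ dist a b) :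
    dist (f t) b = dist a b - t := by
  have h := hf.2.2 t ⟨h0, h1⟩ (dist a b) ⟨dist_nonneg, le_refl _⟩
  rw [hf.2.1] at h
  rw [h, abs_of_nonpos (by linarith)]; ring

/-- Four-point (Gromov) inequality derived from thin triangles. -/
lemma hyp4 {X : Type*} [MetricSpace X] {δ : ℝ}
    (hgeo : GeodesicSpace X) (hslim : SlimTriangles X δ) (w a b c : X) :
    min (gpr w a b) (gpr w b c) - δ ≤ gpr w a c := by
  obtain ⟨f, hf⟩ := hgeo w a
  obtain ⟨k, hk⟩ := hgeo w b
  obtain ⟨l, hl⟩ := hgeo w c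
  set t := min (gpr w a b) (gpr w b c) with ht
  have ht0 : 0 ≤ t := le_min (gpr_nonneg _ _ _) (gpr_nonneg _ _ _)
  have h1 : dist (f t) (k t) ≤ δ := by
    refine hslim w a b f k hf hk t ht0 ?_
    have := min_le_left (gpr w a b) (gpr w b c)
    rw [← ht] at this; unfold gpr at this; linarith
  have h2 : dist (k t) (l t) ≤ δ := by
    refine hslim w b c k l hk hl t ht0 ?_
    have := min_le_right (gpr w a b) (gpr w b c)
    rw [← ht] at this; unfold gpr at this; linarith
  have hta : t ≤ dist w a := le_trans (min_le_left _ _) (gpr_le_left w a b)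
  have htc : t ≤ dist w c := by
    have := gpr_le_left w c b
    rw [← gpr_comm23] at this
    exact le_trans (min_le_right _ _) this
  have hfa : dist (f t) a = dist w a - t := geod_dist_to_end hf ht0 hta
  have hlc : dist (l t) c = dist w c - t := geod_dist_to_end hl ht0 htc
  have h3 : dist a (l t) ≤ dist a (f t) + dist (f t) (k t) + dist (k t) (l t) :=
    dist_triangle4 a (f t) (k t) (l t)
  have h4 : dist a c ≤ dist a (l t) + dist (l t) c := dist_triangle _ _ _
  rw [dist_comm a (f t)] at h3
  unfold gpr; linarith

/-- Broken-geodesic (chain) lemma. -/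
lemma chainlem {X : Type*} [MetricSpace X] {δ K L : ℝ} (hδ : 0 ≤ δ)
    (h4 : ∀ w a b c : X, min (gpr w a b) (gpr w b c) - δ ≤ gpr w a c)
    (x : ℕ → X) (hKL : 2 * K + 4 * δ < L)
    (hlen : ∀ i : ℕ, L ≤ dist (x i) (x (i + 1)))
    (hpr : ∀ i : ℕ, gpr (x (i + 1)) (x i) (x (i + 2)) ≤ K) :
    ∀ n : ℕ, gpr (x (n + 1)) (x 0) (x (n + 2)) ≤ K + δ ∧
      (∑ i ∈ Finset.range (n + 1), dist (x i) (x (i + 1))) - 2 * (n : ℝ) * (K + δ)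
        ≤ dist (x 0) (x (n + 1)) := by
  intro n
  induction n with
  | zero =>
    constructor
    · exact le_trans (hpr 0) (by linarith)
    · simp
  | succ n ih =>
    have hfirst : gpr (x (n + 2)) (x 0) (x (n + 3)) ≤ K + δ := by
      have hA : L - (K + δ) ≤ gpr (x (n + 2)) (x (n + 1)) (x 0) := by
        have hid := gpr_add (x (n + 2)) (x (n + 1)) (x 0)
        have h1 : gpr (x (n + 1)) (x (n + 2)) (x 0) ≤ K + δ := by
          rw [gpr_comm23]; exact ih.1
        have h2 := hlen (n + 1)
        rw [dist_comm (x (n + 1)) (x (n + 2))] at h2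
        linarith
      by_contra hB
      push_neg at hB
      have hmin : K + δ < min (gpr (x (n + 2)) (x (n + 1)) (x 0))
          (gpr (x (n + 2)) (x 0) (x (n + 3))) := by
        refine lt_min ?_ hB
        linarith
      have h5 := h4 (x (n + 2)) (x (n + 1)) (x 0) (x (n + 3))
      have h6 := hpr (n + 1)
      linarith
    refine ⟨hfirst, ?_⟩
    have hd : dist (x 0) (x (n + 2)) =
        dist (x 0) (x (n + 1)) + dist (x (n + 1)) (x (n + 2))
          - 2 * gpr (x (n + 1)) (x 0) (x (n + 2)) := by
      have := dist_eq_gpr (x (n + 1)) (x 0) (x (n + 2))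
      rw [dist_comm (x (n + 1)) (x 0)] at this
      linarith
    have hsum := Finset.sum_range_succ (fun i => dist (x i) (x (i + 1))) (n + 1)
    have ih1 := ih.1
    have ih2 := ih.2
    rw [hsum]
    push_cast
    linarith

end Stmt19Aux

/-- (Proposition 2.30 of the paper.)  If `‖g‖ > 15δ`, `‖h‖ > 15δ`
and `‖gh‖ > 5δ`, then the distance between the axes `𝒜_g` and `𝒜_h` (the infimum
of distances between their points) is at most
`max { 15δ, (‖gh‖ - ‖g‖ - ‖h‖)/2 + 18δ }`. -/
theorem stmt19 (H : Type) [Group H] (S : Set H) (δ : ℝ)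
    (X : Type) [MetricSpace X] [MulAction H X] (ι : H → X)
    (hfin : S.Finite) (hgen : Subgroup.closure S = ⊤) (hδ : 0 ≤ δ)
    (htf : ∀ g : H, g ≠ 1 → ¬IsOfFinOrder g)
    (hcay : CayleyModel S X ι) (hgeo : GeodesicSpace X) (hslim : SlimTriangles X δ)
    (g h : H) (hg : xnorm X g > 15 * δ) (hh : xnorm X h > 15 * δ)
    (hgh : xnorm X (g * h) > 5 * δ) :
    sInf {d : ℝ | ∃ p ∈ axisOf X g, ∃ q ∈ axisOf X h, d = dist p q} ≤
      max (15 * δ) ((xnorm X (g * h) - xnorm X g - xnorm X h) / 2 + 18 * δ) := by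
  classical
  set T := {d : ℝ | ∃ p ∈ axisOf X g, ∃ q ∈ axisOf X h, d = dist p q} with hTdef
  rcases Set.eq_empty_or_nonempty T with hT | hne
  · rw [hT, Real.sInf_empty]
    exact le_max_of_le_left (by linarith)
  have hbdd : BddBelow T := ⟨0, by rintro d ⟨p, hp, q, hq, rfl⟩; exact dist_nonneg⟩
  by_contra hcon
  push_neg at hcon
  set D := sInf T with hDdef
  have hD15 : 15 * δ < D := (le_max_left _ _).trans_lt hcon
  have hDE : (xnorm X (g * h) - xnorm X g - xnorm X h) / 2 + 18 * δ < D :=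
    (le_max_right _ _).trans_lt hcon
  have hiso := hcay.isom
  have hgpr : ∀ (γ : H) (a b c : X),
      Stmt19Aux.gpr (γ • a) (γ • b) (γ • c) = Stmt19Aux.gpr a b c := by
    intro γ a b c
    unfold Stmt19Aux.gpr
    rw [hiso γ a b, hiso γ a c, hiso γ b c]
  have hxle : ∀ (k : H) (x : X), xnorm X k ≤ dist x (k • x) := by
    intro k x
    apply csInf_le
    · exact ⟨0, by rintro d ⟨y, rfl⟩; exact dist_nonneg⟩
    · exact ⟨x, rfl⟩
  have hDle : ∀ u v : X, u ∈ axisOf X g → v ∈ axisOf X h → D ≤ dist u v := by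
    intro u v hu hv
    exact csInf_le hbdd ⟨u, hu, v, hv, rfl⟩
  have hMAIN : 2 * D + xnorm X g + xnorm X h - 16 * δ ≤ xnorm X (g * h) := by
    by_contra hlt
    push_neg at hlt
    set Lm := min D (min (xnorm X g) (xnorm X h)) with hLm
    have hLm15 : 15 * δ < Lm := lt_min hD15 (lt_min hg hh)
    set gap := 2 * D + xnorm X g + xnorm X h - 16 * δ - xnorm X (g * h) with hgap
    have hgap0 : 0 < gap := by rw [hgap]; linarith
    set ε := min ((Lm - 6 * δ) / 4) (gap / 10) with hεdef
    have hε0 : 0 < ε := lt_min (by linarith) (by linarith)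
    have hεL : ε ≤ (Lm - 6 * δ) / 4 := min_le_left _ _
    have hεg : ε ≤ gap / 10 := min_le_right _ _
    -- a near-optimal pair of axis points
    obtain ⟨d0, hd0T, hd0lt⟩ := Real.lt_sInf_add_pos hne hε0
    obtain ⟨p, hpA, q, hqA, rfl⟩ := hd0T
    have hdpq : dist p q < D + ε := hd0lt
    have hpg : dist p (g • p) = xnorm X g := hpA
    have hqh : dist q (h • q) = xnorm X h := hqA
    -- a near-minimizer of the displacement of g*h
    obtain ⟨c0, hc0mem, hc0lt⟩ :=
      Real.lt_sInf_add_pos (s := Set.range fun z : X => dist z ((g * h) • z))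
        ⟨_, ⟨q, rfl⟩⟩ hε0
    obtain ⟨y, rfl⟩ := hc0mem
    have hy : dist y ((g * h) • y) < xnorm X (g * h) + ε := hc0lt
    -- fat axis: points of geodesics [z, k z] are on the axis of k
    have haxA : ∀ (k : H) (z : X), dist z (k • z) = xnorm X k →
        ∀ (e : ℝ → X), IsGeodSeg e z (k • z) → ∀ t : ℝ, 0 ≤ t → t ≤ dist z (k • z) →
        e t ∈ axisOf X k := by
      intro k z hz e he t h0 h1
      have h2 : dist (e t) (k • z) = dist z (k • z) - t :=
        Stmt19Aux.geod_dist_to_end he h0 h1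
      have h3 : dist z (e t) = t := Stmt19Aux.geod_dist_from_start he h0 h1
      have htri := dist_triangle (e t) (k • z) (k • e t)
      rw [hiso k z (e t)] at htri
      have h5 : dist (e t) (k • e t) ≤ xnorm X k := by
        rw [← hz]; linarith
      exact le_antisymm h5 (hxle k (e t))
    have haxA' : ∀ (k : H) (z : X), dist z (k • z) = xnorm X k →
        ∀ (e : ℝ → X), IsGeodSeg e z (k⁻¹ • z) → ∀ t : ℝ, 0 ≤ t → t ≤ dist z (k⁻¹ • z) →
        e t ∈ axisOf X k := by
      intro k z hz e he t h0 h1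
      have hzz : dist z (k⁻¹ • z) = xnorm X k := by
        have h6 := hiso k (k⁻¹ • z) z
        rw [smul_inv_smul] at h6
        rw [dist_comm z (k⁻¹ • z), ← h6, hz]
      have h2 : dist (e t) (k⁻¹ • z) = dist z (k⁻¹ • z) - t :=
        Stmt19Aux.geod_dist_to_end he h0 h1
      have h3 : dist z (e t) = t := Stmt19Aux.geod_dist_from_start he h0 h1
      have h6 : dist z (k • e t) = dist (k⁻¹ • z) (e t) := by
        have h7 := hiso k⁻¹ z (k • e t)
        rw [inv_smul_smul] at h7
        exact h7.symm
      have htri := dist_triangle (e t) z (k • e t)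
      rw [h6, dist_comm (k⁻¹ • z) (e t)] at htri
      have h5 : dist (e t) (k • e t) ≤ xnorm X k := by
        rw [← hzz]; rw [dist_comm z (e t)] at h3; linarith
      exact le_antisymm h5 (hxle k (e t))
    -- orthogonality of near-optimal bridges
    have horth : ∀ c o w : X,
        (∀ (e : ℝ → X), IsGeodSeg e c w → ∀ t : ℝ, 0 ≤ t → t ≤ dist c w →
          D ≤ dist (e t) o) →
        Stmt19Aux.gpr c o w ≤ δ + (dist c o - D) := by
      intro c o w hax
      obtain ⟨f, hf⟩ := hgeo c o
      obtain ⟨e, he⟩ := hgeo c w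
      have ht0 : 0 ≤ Stmt19Aux.gpr c o w := Stmt19Aux.gpr_nonneg _ _ _
      have htco : Stmt19Aux.gpr c o w ≤ dist c o := Stmt19Aux.gpr_le_left _ _ _
      have htcw : Stmt19Aux.gpr c o w ≤ dist c w := by
        have h := Stmt19Aux.gpr_le_left c w o
        rw [← Stmt19Aux.gpr_comm23] at h
        exact h
      have hsl : dist (f (Stmt19Aux.gpr c o w)) (e (Stmt19Aux.gpr c o w)) ≤ δ := by
        refine hslim c o w f e hf he _ ht0 (le_of_eq ?_)
        unfold Stmt19Aux.gpr
        ring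
      have hfo : dist (f (Stmt19Aux.gpr c o w)) o = dist c o - Stmt19Aux.gpr c o w :=
        Stmt19Aux.geod_dist_to_end hf ht0 htco
      have hDu : D ≤ dist (e (Stmt19Aux.gpr c o w)) o := hax e he _ ht0 htcw
      have htri := dist_triangle (e (Stmt19Aux.gpr c o w)) (f (Stmt19Aux.gpr c o w)) o
      rw [dist_comm (e (Stmt19Aux.gpr c o w)) (f (Stmt19Aux.gpr c o w))] at htri
      linarith
    -- the four Gromov products at the bridge ends are small
    have hβ : Stmt19Aux.gpr p q (g • p) ≤ δ + ε := by
      have h1 := horth p q (g • p)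
        (fun e he t h0 h1 => hDle _ q (haxA g p hpg e he t h0 h1) hqA)
      linarith
    have hβ' : Stmt19Aux.gpr p q (g⁻¹ • p) ≤ δ + ε := by
      have h1 := horth p q (g⁻¹ • p)
        (fun e he t h0 h1 => hDle _ q (haxA' g p hpg e he t h0 h1) hqA)
      linarith
    have hα : Stmt19Aux.gpr q p (h • q) ≤ δ + ε := by
      have h1 := horth q p (h • q)
        (fun e he t h0 h1 => by
          rw [dist_comm]
          exact hDle p _ hpA (haxA h q hqh e he t h0 h1))
      rw [dist_comm q p] at h1
      linarith
    have hα' : Stmt19Aux.gpr q p (h⁻¹ • q) ≤ δ + ε := by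
      have h1 := horth q p (h⁻¹ • q)
        (fun e he t h0 h1 => by
          rw [dist_comm]
          exact hDle p _ hpA (haxA' h q hqh e he t h0 h1))
      rw [dist_comm q p] at h1
      linarith
    -- the broken geodesic chain
    set c4 : ℕ → X := fun r => if r = 0 then q else if r = 1 then p
      else if r = 2 then g • p else g • q with hc4
    set x : ℕ → X := fun i => ((g * h) ^ (i / 4)) • c4 (i % 4) with hx
    have hx4 : ∀ k : ℕ, x (4 * k) = (g * h) ^ k • q ∧ x (4 * k + 1) = (g * h) ^ k • p ∧
        x (4 * k + 2) = (g * h) ^ k • (g • p) ∧ x (4 * k + 3) = (g * h) ^ k • (g • q) := by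
      intro k
      have e0 : (4 * k) / 4 = k := by omega
      have m0 : (4 * k) % 4 = 0 := by omega
      have e1 : (4 * k + 1) / 4 = k := by omega
      have m1 : (4 * k + 1) % 4 = 1 := by omega
      have e2 : (4 * k + 2) / 4 = k := by omega
      have m2 : (4 * k + 2) % 4 = 2 := by omega
      have e3 : (4 * k + 3) / 4 = k := by omega
      have m3 : (4 * k + 3) % 4 = 3 := by omega
      refine ⟨?_, ?_, ?_, ?_⟩ <;>
        simp only [hx, hc4, e0, m0, e1, m1, e2, m2, e3, m3] <;> norm_num
    have hx44 : ∀ k : ℕ, x (4 * k + 4) = (g * h) ^ (k + 1) • q := by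
      intro k
      have h1 := (hx4 (k + 1)).1
      rw [show 4 * (k + 1) = 4 * k + 4 from by ring] at h1
      exact h1
    have hx45 : ∀ k : ℕ, x (4 * k + 5) = (g * h) ^ (k + 1) • p := by
      intro k
      have h1 := (hx4 (k + 1)).2.1
      rw [show 4 * (k + 1) + 1 = 4 * k + 5 from by ring] at h1
      exact h1
    have hseg0 : ∀ k : ℕ, dist (x (4 * k)) (x (4 * k + 1)) = dist p q := by
      intro k
      rw [(hx4 k).1, (hx4 k).2.1, hiso ((g * h) ^ k) q p, dist_comm q p]
    have hseg1 : ∀ k : ℕ, dist (x (4 * k + 1)) (x (4 * k + 2)) = xnorm X g := by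
      intro k
      rw [(hx4 k).2.1, (hx4 k).2.2.1, hiso ((g * h) ^ k) p (g • p), hpg]
    have hseg2 : ∀ k : ℕ, dist (x (4 * k + 2)) (x (4 * k + 3)) = dist p q := by
      intro k
      rw [(hx4 k).2.2.1, (hx4 k).2.2.2, hiso ((g * h) ^ k) (g • p) (g • q), hiso g p q]
    have hseg3 : ∀ k : ℕ, dist (x (4 * k + 3)) (x (4 * k + 4)) = xnorm X h := by
      intro k
      have h44 : x (4 * k + 4) = (g * h) ^ k • ((g * h) • q) := by
        rw [hx44 k, pow_succ, mul_smul]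
      rw [(hx4 k).2.2.2, h44, hiso ((g * h) ^ k) (g • q) ((g * h) • q),
        mul_smul g h q, hiso g q (h • q), hqh]
    have hDpq : D ≤ dist p q := hDle p q hpA hqA
    have hlen : ∀ i : ℕ, Lm ≤ dist (x i) (x (i + 1)) := by
      intro i
      obtain ⟨k, r, hr, rfl⟩ : ∃ k r, r < 4 ∧ i = 4 * k + r :=
        ⟨i / 4, i % 4, Nat.mod_lt _ (by norm_num), by omega⟩
      have hLmD : Lm ≤ D := min_le_left _ _
      have hLmg : Lm ≤ xnorm X g := le_trans (min_le_right _ _) (min_le_left _ _)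
      have hLmh : Lm ≤ xnorm X h := le_trans (min_le_right _ _) (min_le_right _ _)
      interval_cases r
      · rw [show 4 * k + 0 = 4 * k from by omega, show 4 * k + 1 = 4 * k + 1 from rfl]
        rw [hseg0 k]; linarith
      · rw [show 4 * k + 1 + 1 = 4 * k + 2 from by omega, hseg1 k]; linarith
      · rw [show 4 * k + 2 + 1 = 4 * k + 3 from by omega, hseg2 k]; linarith
      · rw [show 4 * k + 3 + 1 = 4 * k + 4 from by omega, hseg3 k]; linarith
    have hpr : ∀ i : ℕ, Stmt19Aux.gpr (x (i + 1)) (x i) (x (i + 2)) ≤ δ + ε := by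
      intro i
      obtain ⟨k, r, hr, rfl⟩ : ∃ k r, r < 4 ∧ i = 4 * k + r :=
        ⟨i / 4, i % 4, Nat.mod_lt _ (by norm_num), by omega⟩
      interval_cases r
      · rw [show 4 * k + 0 + 1 = 4 * k + 1 from by omega,
          show 4 * k + 0 = 4 * k from by omega,
          show 4 * k + 0 + 2 = 4 * k + 2 from by omega,
          (hx4 k).2.1, (hx4 k).1, (hx4 k).2.2.1, hgpr]
        exact hβ
      · rw [show 4 * k + 1 + 1 = 4 * k + 2 from by omega,
          show 4 * k + 1 + 2 = 4 * k + 3 from by omega,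
          (hx4 k).2.2.1, (hx4 k).2.1, (hx4 k).2.2.2, hgpr]
        have hrw : Stmt19Aux.gpr (g • p) p (g • q) = Stmt19Aux.gpr p (g⁻¹ • p) q := by
          have h1 := hgpr g p (g⁻¹ • p) q
          rw [smul_inv_smul] at h1
          exact h1
        rw [hrw, Stmt19Aux.gpr_comm23]
        exact hβ'
      · rw [show 4 * k + 2 + 1 = 4 * k + 3 from by omega,
          show 4 * k + 2 + 2 = 4 * k + 4 from by omega,
          (hx4 k).2.2.2, (hx4 k).2.2.1, hx44 k, pow_succ, mul_smul, hgpr]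
        rw [mul_smul g h q]
        rw [hgpr g q p (h • q)]
        exact hα
      · rw [show 4 * k + 3 + 1 = 4 * k + 4 from by omega,
          show 4 * k + 3 + 2 = 4 * k + 5 from by omega,
          hx44 k, hx45 k]
        have hleft : x (4 * k + 3) = (g * h) ^ (k + 1) • (h⁻¹ • q) := by
          rw [(hx4 k).2.2.2, pow_succ, mul_smul, mul_smul g h (h⁻¹ • q), smul_inv_smul]
        rw [hleft, hgpr, Stmt19Aux.gpr_comm23]
        exact hα'
    have h4 : ∀ w a b c : X,
        min (Stmt19Aux.gpr w a b) (Stmt19Aux.gpr w b c) - δ ≤ Stmt19Aux.gpr w a c :=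
      fun w a b c => Stmt19Aux.hyp4 hgeo hslim w a b c
    have hKL : 2 * (δ + ε) + 4 * δ < Lm := by linarith
    have hchain := Stmt19Aux.chainlem hδ h4 x hKL hlen hpr
    -- lower bound for the sums
    have hsum : ∀ N : ℕ, (N : ℝ) * (2 * D + xnorm X g + xnorm X h) ≤
        ∑ i ∈ Finset.range (4 * N), dist (x i) (x (i + 1)) := by
      intro N
      induction N with
      | zero => simp
      | succ N ih =>
        rw [show 4 * (N + 1) = (4 * N + 1 + 1 + 1) + 1 from by ring,
          Finset.sum_range_succ, Finset.sum_range_succ, Finset.sum_range_succ,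
          Finset.sum_range_succ]
        rw [show 4 * N + 1 + 1 + 1 = 4 * N + 3 from by omega,
          show 4 * N + 1 + 1 = 4 * N + 2 from by omega]
        rw [show 4 * N + 3 + 1 = 4 * N + 4 from by omega,
          show 4 * N + 2 + 1 = 4 * N + 3 from by omega,
          show 4 * N + 1 + 1 = 4 * N + 2 from by omega,
          show 4 * N + 0 + 1 = 4 * N + 1 from by omega]
        rw [hseg0 N, hseg1 N, hseg2 N, hseg3 N]
        push_cast
        linarith
      -- note: indices may need adjustment
    -- upper bound using the near-minimizer y
    have hup : ∀ N : ℕ, dist (x 0) (x (4 * N)) ≤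
        2 * dist q y + (N : ℝ) * (xnorm X (g * h) + ε) := by
      intro N
      have hx0 : x 0 = q := by
        have h1 := (hx4 0).1
        simpa using h1
      have hxN : x (4 * N) = (g * h) ^ N • q := (hx4 N).1
      have hpow : ∀ n : ℕ, dist y ((g * h) ^ n • y) ≤ (n : ℝ) * dist y ((g * h) • y) := by
        intro n
        induction n with
        | zero => simp
        | succ n ih =>
          have hrw : (g * h) ^ (n + 1) • y = (g * h) • ((g * h) ^ n • y) := by
            rw [← mul_smul, ← pow_succ']
          have h7 : dist ((g * h) • y) ((g * h) ^ (n + 1) • y) = dist y ((g * h) ^ n • y) := by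
            rw [hrw, hiso (g * h) y ((g * h) ^ n • y)]
          have htri := dist_triangle y ((g * h) • y) ((g * h) ^ (n + 1) • y)
          rw [h7] at htri
          push_cast
          linarith
      have htri := dist_triangle4 q y ((g * h) ^ N • y) ((g * h) ^ N • q)
      have h2 : dist ((g * h) ^ N • y) ((g * h) ^ N • q) = dist y q :=
        hiso ((g * h) ^ N) y q
      have h3 := hpow N
      have h5 : (N : ℝ) * dist y ((g * h) • y) ≤ (N : ℝ) * (xnorm X (g * h) + ε) :=
        mul_le_mul_of_nonneg_left (le_of_lt hy) (Nat.cast_nonneg N)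
      rw [hx0, hxN]
      rw [dist_comm y q] at h2
      linarith
    -- combine
    have hcomb : ∀ N : ℕ, (N : ℝ) * (2 * D + xnorm X g + xnorm X h - 16 * δ - 8 * ε) ≤
        2 * dist q y + (N : ℝ) * (xnorm X (g * h) + ε) := by
      intro N
      rcases Nat.eq_zero_or_pos N with rfl | hN
      · simp
      · obtain ⟨n, hn⟩ : ∃ n : ℕ, 4 * N = n + 1 := ⟨4 * N - 1, by omega⟩
        have hch := (hchain n).2
        rw [← hn] at hch
        have hncast : (n : ℝ) = 4 * (N : ℝ) - 1 := by
          have h1 : (4 * N : ℕ) = n + 1 := hn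
          have h2 : 4 * (N : ℝ) = (n : ℝ) + 1 := by exact_mod_cast h1
          linarith
        have hs := hsum N
        have hu := hup N
        have hexp : 2 * (n : ℝ) * ((δ + ε) + δ) =
            16 * (N : ℝ) * δ + 8 * (N : ℝ) * ε - 4 * δ - 2 * ε := by
          rw [hncast]; ring
        linarith [hch, hs, hu, hexp]
    -- Archimedean conclusion
    have hA : 0 < 2 * D + xnorm X g + xnorm X h - 16 * δ - 8 * ε - (xnorm X (g * h) + ε) := by
      have : gap = 2 * D + xnorm X g + xnorm X h - 16 * δ - xnorm X (g * h) := hgap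
      linarith
    obtain ⟨N, hN⟩ := exists_nat_gt ((2 * dist q y) /
      (2 * D + xnorm X g + xnorm X h - 16 * δ - 8 * ε - (xnorm X (g * h) + ε)))
    rw [div_lt_iff₀ hA] at hN
    have h1 := hcomb N
    linarith
  linarith
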